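/- For all x > 0, exp((cosh^{8/15}x − 1)·(5/8)) > (sinh x)/x, i.e., (sinh x)/x < exp((5/8)(cosh x)^{8/15} − 5/8). -/

import Mathlib

open Real Set Filter



lemma mono_ici {f f' : ℝ → ℝ} (hd : ∀ t, 0 ≤ t → HasDerivAt f (f' t) t)
    (h0 : ∀ t, 0 < t → 0 ≤ f' t) {x : ℝ} (hx : 0 ≤ x) : f 0 ≤ f x := by
  have h := monotoneOn_of_deriv_nonneg (convex_Ici 0)
    (fun t ht => (hd t ht).continuousAt.continuousWithinAt)
    (fun t ht => by
      rw [interior_Ici] at ht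
      exact (hd t (le_of_lt ht)).differentiableAt.differentiableWithinAt)
    (fun t ht => by
      rw [interior_Ici] at ht
      rw [(hd t (le_of_lt ht)).deriv]
      exact h0 t ht)
  exact h (self_mem_Ici) hx hx

lemma mono_icc {a b : ℝ} {f f' : ℝ → ℝ} (hd : ∀ t ∈ Icc a b, HasDerivAt f (f' t) t)
    (h0 : ∀ t ∈ Ioo a b, 0 ≤ f' t) {x : ℝ} (hx : x ∈ Icc a b) : f a ≤ f x := by
  have h := monotoneOn_of_deriv_nonneg (convex_Icc a b)
    (fun t ht => (hd t ht).continuousAt.continuousWithinAt)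
    (fun t ht => by
      rw [interior_Icc] at ht
      exact (hd t ⟨ht.1.le, ht.2.le⟩).differentiableAt.differentiableWithinAt)
    (fun t ht => by
      rw [interior_Icc] at ht
      rw [(hd t ⟨ht.1.le, ht.2.le⟩).deriv]
      exact h0 t ht)
  exact h (left_mem_Icc.mpr (hx.1.trans hx.2)) hx hx.1
lemma bern_neg (u : ℝ) (hu : 0 ≤ u) : 1 - 23/15*u ≤ (1+u) ^ (-(23:ℝ)/15) := by
  have h1 : (0:ℝ) < 1 + u := by linarith
  have hpos : 0 < (1+u) ^ (-(23:ℝ)/15) := rpow_pos_of_pos h1 _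
  rcases le_or_gt (1 - 23/15*u) 0 with h | h
  · linarith
  · have h815 : (1+u) ^ ((8:ℝ)/15) ≤ 1 + 8/15*u := by
      have := rpow_one_add_le_one_add_mul_self (s := u) (by linarith) (p := 8/15) (by norm_num) (by norm_num)
      linarith [this]
    have hsplit : (1+u) ^ ((23:ℝ)/15) = (1+u) * (1+u) ^ ((8:ℝ)/15) := by
      rw [show ((23:ℝ)/15) = 1 + (8:ℝ)/15 by norm_num, rpow_one_add' (by linarith) (by norm_num)]
    have hneg : (1+u) ^ (-(23:ℝ)/15) = ((1+u) ^ ((23:ℝ)/15))⁻¹ := by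
      rw [show (-(23:ℝ)/15) = -((23:ℝ)/15) by ring, rpow_neg (by linarith)]
    have h2 : (0:ℝ) < (1+u) ^ ((23:ℝ)/15) := rpow_pos_of_pos h1 _
    have hb : (1 - 23/15*u) * ((1+u) ^ ((23:ℝ)/15)) ≤ 1 := by
      rw [hsplit]
      have e1 : (1 - 23/15*u) * ((1+u) * ((1+u) ^ ((8:ℝ)/15))) ≤ (1 - 23/15*u) * ((1+u) * (1+8/15*u)) := by
        apply mul_le_mul_of_nonneg_left _ h.le
        exact mul_le_mul_of_nonneg_left h815 h1.le
      have e2 : (1 - 23/15*u) * ((1+u) * (1+8/15*u)) ≤ 1 := by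
        nlinarith [sq_nonneg u, mul_nonneg (mul_nonneg hu hu) hu]
      linarith
    have h4 : (1+u) ^ ((23:ℝ)/15) * ((1+u) ^ ((23:ℝ)/15))⁻¹ = 1 := mul_inv_cancel₀ h2.ne'
    rw [hneg]
    calc 1 - 23/15*u = ((1-23/15*u) * ((1+u) ^ ((23:ℝ)/15))) * ((1+u) ^ ((23:ℝ)/15))⁻¹ := by
          rw [mul_assoc, h4]; ring
      _ ≤ 1 * ((1+u) ^ ((23:ℝ)/15))⁻¹ := mul_le_mul_of_nonneg_right hb (inv_nonneg.mpr h2.le)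
      _ = ((1+u) ^ ((23:ℝ)/15))⁻¹ := one_mul _

-- derivative of u ↦ (1+u)^p
lemma hasDeriv_rpow1p (p : ℝ) (u : ℝ) (hu : 0 ≤ u) :
    HasDerivAt (fun u : ℝ => (1+u) ^ p) (p * (1+u) ^ (p-1)) u := by
  have h1 : HasDerivAt (fun u : ℝ => 1+u) 1 u := (hasDerivAt_id u).const_add 1
  have := h1.rpow_const (p := p) (Or.inl (by positivity))
  simpa using this

-- step 1 : φ₁ ≥ 0
lemma phi1_nonneg (u : ℝ) (hu : 0 ≤ u) :
    0 ≤ 7/15 - 56/225*u + 644/3375*u^2 - 7/15*(1+u) ^ (-(8:ℝ)/15) := by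
  have h := mono_ici (f := fun u : ℝ => 7/15 - 56/225*u + 644/3375*u^2 - 7/15*(1+u) ^ (-(8:ℝ)/15))
    (f' := fun u : ℝ => -56/225 + 1288/3375*u + 56/225*(1+u) ^ (-(23:ℝ)/15))
    (fun t ht => by
      have hp : HasDerivAt (fun u : ℝ => (1+u) ^ (-(8:ℝ)/15)) ((-(8:ℝ)/15) * (1+t) ^ (-(8:ℝ)/15-1)) t :=
        hasDeriv_rpow1p _ t ht
      have h2 : HasDerivAt (fun u : ℝ => 7/15 - 56/225*u + 644/3375*u^2) (-56/225 + 1288/3375*t) t := by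
        have ha : HasDerivAt (fun u : ℝ => (56:ℝ)/225*u) (56/225) t := by
          simpa using (hasDerivAt_id t).const_mul ((56:ℝ)/225)
        have hb : HasDerivAt (fun u : ℝ => (644:ℝ)/3375*u^2) (644/3375*(2*t)) t := by
          simpa using (hasDerivAt_pow 2 t).const_mul ((644:ℝ)/3375)
        have := (ha.const_sub (7/15)).add hb
        exact this.congr_deriv (by ring)
      have := h2.sub (hp.const_mul (7/15))
      refine this.congr_deriv ?_
      all_goals (beta_reduce; rw [show (-(8:ℝ)/15-1) = -(23:ℝ)/15 by norm_num]; ring))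
    (fun t ht => by
      have := bern_neg t ht.le
      nlinarith [this]) hu
  simpa using h

-- step 2 : the cubic upper bound for (1+u)^(7/15)
lemma rpow715_T3 (u : ℝ) (hu : 0 ≤ u) :
    (1+u) ^ ((7:ℝ)/15) ≤ 1 + 7/15*u - 28/225*u^2 + 644/10125*u^3 := by
  have h := mono_ici (f := fun u : ℝ => 1 + 7/15*u - 28/225*u^2 + 644/10125*u^3 - (1+u) ^ ((7:ℝ)/15))
    (f' := fun u : ℝ => 7/15 - 56/225*u + 644/3375*u^2 - 7/15*(1+u) ^ (-(8:ℝ)/15))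
    (fun t ht => by
      have hp : HasDerivAt (fun u : ℝ => (1+u) ^ ((7:ℝ)/15)) (((7:ℝ)/15) * (1+t) ^ ((7:ℝ)/15-1)) t :=
        hasDeriv_rpow1p _ t ht
      have h2 : HasDerivAt (fun u : ℝ => 1 + 7/15*u - 28/225*u^2 + 644/10125*u^3)
          (7/15 - 28/225*(2*t) + 644/10125*(3*t^2)) t := by
        have ha : HasDerivAt (fun u : ℝ => (7:ℝ)/15*u) (7/15) t := by
          simpa using (hasDerivAt_id t).const_mul ((7:ℝ)/15)
        have hb : HasDerivAt (fun u : ℝ => (28:ℝ)/225*u^2) (28/225*(2*t)) t := by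
          simpa using (hasDerivAt_pow 2 t).const_mul ((28:ℝ)/225)
        have hc : HasDerivAt (fun u : ℝ => (644:ℝ)/10125*u^3) (644/10125*(3*t^2)) t := by
          simpa using (hasDerivAt_pow 3 t).const_mul ((644:ℝ)/10125)
        have := ((ha.const_add 1).sub hb).add hc
        exact this.congr_deriv (by ring)
      have := h2.sub hp
      refine this.congr_deriv ?_
      all_goals (beta_reduce; rw [show ((7:ℝ)/15-1) = -(8:ℝ)/15 by norm_num]; ring))
    (fun t ht => phi1_nonneg t ht.le) hu
  simp only [mul_zero, zero_pow, ne_eq, OfNat.ofNat_ne_zero, not_false_eq_true, add_zero] at h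
  have h0 : ((1:ℝ)+0) ^ ((7:ℝ)/15) = 1 := by norm_num
  nlinarith [h]

lemma exp_half_ub : Real.exp (1/2) ≤ 2533/1536 := by
  have h := Real.exp_bound (x := 1/2) (by rw [abs_of_nonneg] <;> norm_num) (n := 4) (by norm_num)
  have hs : ∑ m ∈ Finset.range 4, ((1:ℝ)/2)^m / m.factorial = 79/48 := by
    simp [Finset.sum_range_succ, Nat.factorial]; norm_num
  rw [hs] at h
  rw [abs_le] at h
  have : |(1:ℝ)/2| = 1/2 := by rw [abs_of_nonneg]; norm_num
  rw [this] at h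
  simp [Nat.factorial] at h
  norm_num at h ⊢
  linarith [h.2]

lemma cosh_le_exp' {x : ℝ} (hx : 0 ≤ x) : Real.cosh x ≤ Real.exp x := by
  rw [Real.cosh_eq]
  have : Real.exp (-x) ≤ Real.exp x := Real.exp_le_exp.mpr (by linarith)
  linarith

lemma exp_32_ub : Real.exp (3/2) ≤ 9/2 := by
  have h : Real.exp (3/2) = Real.exp 1 * Real.exp (1/2) := by
    rw [← Real.exp_add]; norm_num
  rw [h]
  have h1 := Real.exp_one_lt_d9.le
  have h2 := exp_half_ub
  nlinarith [Real.exp_pos 1, Real.exp_pos (1/2)]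

lemma exp_112_ub : Real.exp (11/2) ≤ 245 := by
  have h : Real.exp (11/2) = (Real.exp 1)^5 * Real.exp (1/2) := by
    rw [← Real.exp_nat_mul 1 5, ← Real.exp_add]
    norm_num
  rw [h]
  have h1 := Real.exp_one_lt_d9.le
  have h2 := exp_half_ub
  have h3 : (Real.exp 1)^5 ≤ (2.7182818286:ℝ)^5 := pow_le_pow_left₀ (Real.exp_pos 1).le h1 5
  nlinarith [Real.exp_pos (1/2), pow_pos (Real.exp_pos 1) 5]

lemma Vc0 : ∀ t ∈ Icc (0:ℝ) (3/2), Real.cosh t ≤ 9/2 := by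
  intro t ht
  calc Real.cosh t ≤ Real.cosh (3/2) := by
        rw [Real.cosh_le_cosh, abs_of_nonneg ht.1, abs_of_nonneg (by norm_num : (0:ℝ) ≤ 3/2)]
        exact ht.2
    _ ≤ Real.exp (3/2) := cosh_le_exp' (by norm_num)
    _ ≤ 9/2 := exp_32_ub

lemma Uc0 : ∀ t ∈ Icc (0:ℝ) (11/2), Real.cosh t ≤ 245 := by
  intro t ht
  calc Real.cosh t ≤ Real.cosh (11/2) := by
        rw [Real.cosh_le_cosh, abs_of_nonneg ht.1, abs_of_nonneg (by norm_num : (0:ℝ) ≤ 11/2)]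
        exact ht.2
    _ ≤ Real.exp (11/2) := cosh_le_exp' (by norm_num)
    _ ≤ 245 := exp_112_ub

lemma tcs (x : ℝ) (hx : 0 ≤ x) : Real.sinh x ≤ x * Real.cosh x := by
  have h := mono_ici (f := fun t => t * Real.cosh t - Real.sinh t)
      (f' := fun t => t * Real.sinh t)
      (fun t ht => by
        have hp := ((hasDerivAt_id t).mul (Real.hasDerivAt_cosh t)).sub (Real.hasDerivAt_sinh t)
        refine hp.congr_deriv ?_
        all_goals (beta_reduce; simp only [id_eq]; ring))
      (fun t ht => by beta_reduce; exact mul_nonneg ht.le (by rw [← Real.sinh_zero]; exact (Real.sinh_le_sinh.mpr ht.le)))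
      hx
  norm_num at h
  linarith

lemma sinh_lb0 (x : ℝ) (hx : 0 ≤ x) : 1*x^1 ≤ Real.sinh x := by
  have := Real.self_le_sinh_iff.mpr hx; nlinarith [this]

lemma cosh_lb1 (x : ℝ) (hx : 0 ≤ x) : 1 + 1/2*x^2 ≤ Real.cosh x := by
  have h := mono_ici (f := fun t => Real.cosh t - (1 + 1/2*t^2))
      (f' := fun t => Real.sinh t - (1*t^1))
      (fun t ht => by
        have hp := (((hasDerivAt_pow 2 t).const_mul ((1/2:ℝ))).const_add 1)
        have h2 := (Real.hasDerivAt_cosh t).sub hp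
        refine h2.congr_deriv ?_
        all_goals (beta_reduce; push_cast; ring))
      (fun t ht => by beta_reduce; have := sinh_lb0 t ht.le; linarith) hx
  norm_num at h
  linarith

lemma sinh_lb1 (x : ℝ) (hx : 0 ≤ x) : 1*x^1 + 1/6*x^3 ≤ Real.sinh x := by
  have h := mono_ici (f := fun t => Real.sinh t - (1*t^1 + 1/6*t^3))
      (f' := fun t => Real.cosh t - (1 + 1/2*t^2))
      (fun t ht => by
        have hp := (((hasDerivAt_pow 1 t).const_mul ((1:ℝ))).add ((hasDerivAt_pow 3 t).const_mul ((1/6:ℝ))))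
        have h2 := (Real.hasDerivAt_sinh t).sub hp
        refine h2.congr_deriv ?_
        all_goals (beta_reduce; push_cast; ring))
      (fun t ht => by beta_reduce; have := cosh_lb1 t ht.le; linarith) hx
  norm_num at h
  linarith

lemma cosh_lb2 (x : ℝ) (hx : 0 ≤ x) : 1 + 1/2*x^2 + 1/24*x^4 ≤ Real.cosh x := by
  have h := mono_ici (f := fun t => Real.cosh t - (1 + 1/2*t^2 + 1/24*t^4))
      (f' := fun t => Real.sinh t - (1*t^1 + 1/6*t^3))
      (fun t ht => by
        have hp := ((((hasDerivAt_pow 2 t).const_mul ((1/2:ℝ))).const_add 1).add ((hasDerivAt_pow 4 t).const_mul ((1/24:ℝ))))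
        have h2 := (Real.hasDerivAt_cosh t).sub hp
        refine h2.congr_deriv ?_
        all_goals (beta_reduce; push_cast; ring))
      (fun t ht => by beta_reduce; have := sinh_lb1 t ht.le; linarith) hx
  norm_num at h
  linarith

lemma sinh_lb2 (x : ℝ) (hx : 0 ≤ x) : 1*x^1 + 1/6*x^3 + 1/120*x^5 ≤ Real.sinh x := by
  have h := mono_ici (f := fun t => Real.sinh t - (1*t^1 + 1/6*t^3 + 1/120*t^5))
      (f' := fun t => Real.cosh t - (1 + 1/2*t^2 + 1/24*t^4))
      (fun t ht => by
        have hp := ((((hasDerivAt_pow 1 t).const_mul ((1:ℝ))).add ((hasDerivAt_pow 3 t).const_mul ((1/6:ℝ)))).add ((hasDerivAt_pow 5 t).const_mul ((1/120:ℝ))))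
        have h2 := (Real.hasDerivAt_sinh t).sub hp
        refine h2.congr_deriv ?_
        all_goals (beta_reduce; push_cast; ring))
      (fun t ht => by beta_reduce; have := cosh_lb2 t ht.le; linarith) hx
  norm_num at h
  linarith

lemma cosh_lb3 (x : ℝ) (hx : 0 ≤ x) : 1 + 1/2*x^2 + 1/24*x^4 + 1/720*x^6 ≤ Real.cosh x := by
  have h := mono_ici (f := fun t => Real.cosh t - (1 + 1/2*t^2 + 1/24*t^4 + 1/720*t^6))
      (f' := fun t => Real.sinh t - (1*t^1 + 1/6*t^3 + 1/120*t^5))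
      (fun t ht => by
        have hp := (((((hasDerivAt_pow 2 t).const_mul ((1/2:ℝ))).const_add 1).add ((hasDerivAt_pow 4 t).const_mul ((1/24:ℝ)))).add ((hasDerivAt_pow 6 t).const_mul ((1/720:ℝ))))
        have h2 := (Real.hasDerivAt_cosh t).sub hp
        refine h2.congr_deriv ?_
        all_goals (beta_reduce; push_cast; ring))
      (fun t ht => by beta_reduce; have := sinh_lb2 t ht.le; linarith) hx
  norm_num at h
  linarith

lemma sinh_lb3 (x : ℝ) (hx : 0 ≤ x) : 1*x^1 + 1/6*x^3 + 1/120*x^5 + 1/5040*x^7 ≤ Real.sinh x := by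
  have h := mono_ici (f := fun t => Real.sinh t - (1*t^1 + 1/6*t^3 + 1/120*t^5 + 1/5040*t^7))
      (f' := fun t => Real.cosh t - (1 + 1/2*t^2 + 1/24*t^4 + 1/720*t^6))
      (fun t ht => by
        have hp := (((((hasDerivAt_pow 1 t).const_mul ((1:ℝ))).add ((hasDerivAt_pow 3 t).const_mul ((1/6:ℝ)))).add ((hasDerivAt_pow 5 t).const_mul ((1/120:ℝ)))).add ((hasDerivAt_pow 7 t).const_mul ((1/5040:ℝ))))
        have h2 := (Real.hasDerivAt_sinh t).sub hp
        refine h2.congr_deriv ?_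
        all_goals (beta_reduce; push_cast; ring))
      (fun t ht => by beta_reduce; have := cosh_lb3 t ht.le; linarith) hx
  norm_num at h
  linarith

lemma cosh_lb4 (x : ℝ) (hx : 0 ≤ x) : 1 + 1/2*x^2 + 1/24*x^4 + 1/720*x^6 + 1/40320*x^8 ≤ Real.cosh x := by
  have h := mono_ici (f := fun t => Real.cosh t - (1 + 1/2*t^2 + 1/24*t^4 + 1/720*t^6 + 1/40320*t^8))
      (f' := fun t => Real.sinh t - (1*t^1 + 1/6*t^3 + 1/120*t^5 + 1/5040*t^7))
      (fun t ht => by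
        have hp := ((((((hasDerivAt_pow 2 t).const_mul ((1/2:ℝ))).const_add 1).add ((hasDerivAt_pow 4 t).const_mul ((1/24:ℝ)))).add ((hasDerivAt_pow 6 t).const_mul ((1/720:ℝ)))).add ((hasDerivAt_pow 8 t).const_mul ((1/40320:ℝ))))
        have h2 := (Real.hasDerivAt_cosh t).sub hp
        refine h2.congr_deriv ?_
        all_goals (beta_reduce; push_cast; ring))
      (fun t ht => by beta_reduce; have := sinh_lb3 t ht.le; linarith) hx
  norm_num at h
  linarith

lemma sinh_lb4 (x : ℝ) (hx : 0 ≤ x) : 1*x^1 + 1/6*x^3 + 1/120*x^5 + 1/5040*x^7 + 1/362880*x^9 ≤ Real.sinh x := by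
  have h := mono_ici (f := fun t => Real.sinh t - (1*t^1 + 1/6*t^3 + 1/120*t^5 + 1/5040*t^7 + 1/362880*t^9))
      (f' := fun t => Real.cosh t - (1 + 1/2*t^2 + 1/24*t^4 + 1/720*t^6 + 1/40320*t^8))
      (fun t ht => by
        have hp := ((((((hasDerivAt_pow 1 t).const_mul ((1:ℝ))).add ((hasDerivAt_pow 3 t).const_mul ((1/6:ℝ)))).add ((hasDerivAt_pow 5 t).const_mul ((1/120:ℝ)))).add ((hasDerivAt_pow 7 t).const_mul ((1/5040:ℝ)))).add ((hasDerivAt_pow 9 t).const_mul ((1/362880:ℝ))))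
        have h2 := (Real.hasDerivAt_sinh t).sub hp
        refine h2.congr_deriv ?_
        all_goals (beta_reduce; push_cast; ring))
      (fun t ht => by beta_reduce; have := cosh_lb4 t ht.le; linarith) hx
  norm_num at h
  linarith

lemma cosh_lb5 (x : ℝ) (hx : 0 ≤ x) : 1 + 1/2*x^2 + 1/24*x^4 + 1/720*x^6 + 1/40320*x^8 + 1/3628800*x^10 ≤ Real.cosh x := by
  have h := mono_ici (f := fun t => Real.cosh t - (1 + 1/2*t^2 + 1/24*t^4 + 1/720*t^6 + 1/40320*t^8 + 1/3628800*t^10))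
      (f' := fun t => Real.sinh t - (1*t^1 + 1/6*t^3 + 1/120*t^5 + 1/5040*t^7 + 1/362880*t^9))
      (fun t ht => by
        have hp := (((((((hasDerivAt_pow 2 t).const_mul ((1/2:ℝ))).const_add 1).add ((hasDerivAt_pow 4 t).const_mul ((1/24:ℝ)))).add ((hasDerivAt_pow 6 t).const_mul ((1/720:ℝ)))).add ((hasDerivAt_pow 8 t).const_mul ((1/40320:ℝ)))).add ((hasDerivAt_pow 10 t).const_mul ((1/3628800:ℝ))))
        have h2 := (Real.hasDerivAt_cosh t).sub hp
        refine h2.congr_deriv ?_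
        all_goals (beta_reduce; push_cast; ring))
      (fun t ht => by beta_reduce; have := sinh_lb4 t ht.le; linarith) hx
  norm_num at h
  linarith

lemma sinh_lb5 (x : ℝ) (hx : 0 ≤ x) : 1*x^1 + 1/6*x^3 + 1/120*x^5 + 1/5040*x^7 + 1/362880*x^9 + 1/39916800*x^11 ≤ Real.sinh x := by
  have h := mono_ici (f := fun t => Real.sinh t - (1*t^1 + 1/6*t^3 + 1/120*t^5 + 1/5040*t^7 + 1/362880*t^9 + 1/39916800*t^11))
      (f' := fun t => Real.cosh t - (1 + 1/2*t^2 + 1/24*t^4 + 1/720*t^6 + 1/40320*t^8 + 1/3628800*t^10))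
      (fun t ht => by
        have hp := (((((((hasDerivAt_pow 1 t).const_mul ((1:ℝ))).add ((hasDerivAt_pow 3 t).const_mul ((1/6:ℝ)))).add ((hasDerivAt_pow 5 t).const_mul ((1/120:ℝ)))).add ((hasDerivAt_pow 7 t).const_mul ((1/5040:ℝ)))).add ((hasDerivAt_pow 9 t).const_mul ((1/362880:ℝ)))).add ((hasDerivAt_pow 11 t).const_mul ((1/39916800:ℝ))))
        have h2 := (Real.hasDerivAt_sinh t).sub hp
        refine h2.congr_deriv ?_
        all_goals (beta_reduce; push_cast; ring))
      (fun t ht => by beta_reduce; have := cosh_lb5 t ht.le; linarith) hx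
  norm_num at h
  linarith

lemma cosh_lb6 (x : ℝ) (hx : 0 ≤ x) : 1 + 1/2*x^2 + 1/24*x^4 + 1/720*x^6 + 1/40320*x^8 + 1/3628800*x^10 + 1/479001600*x^12 ≤ Real.cosh x := by
  have h := mono_ici (f := fun t => Real.cosh t - (1 + 1/2*t^2 + 1/24*t^4 + 1/720*t^6 + 1/40320*t^8 + 1/3628800*t^10 + 1/479001600*t^12))
      (f' := fun t => Real.sinh t - (1*t^1 + 1/6*t^3 + 1/120*t^5 + 1/5040*t^7 + 1/362880*t^9 + 1/39916800*t^11))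
      (fun t ht => by
        have hp := ((((((((hasDerivAt_pow 2 t).const_mul ((1/2:ℝ))).const_add 1).add ((hasDerivAt_pow 4 t).const_mul ((1/24:ℝ)))).add ((hasDerivAt_pow 6 t).const_mul ((1/720:ℝ)))).add ((hasDerivAt_pow 8 t).const_mul ((1/40320:ℝ)))).add ((hasDerivAt_pow 10 t).const_mul ((1/3628800:ℝ)))).add ((hasDerivAt_pow 12 t).const_mul ((1/479001600:ℝ))))
        have h2 := (Real.hasDerivAt_cosh t).sub hp
        refine h2.congr_deriv ?_
        all_goals (beta_reduce; push_cast; ring))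
      (fun t ht => by beta_reduce; have := sinh_lb5 t ht.le; linarith) hx
  norm_num at h
  linarith

lemma Vs0 : ∀ t ∈ Icc (0:ℝ) (3/2), Real.sinh t ≤ 9/2*t^1 := by
  intro x hx
  have h := mono_icc (a := (0:ℝ)) (b := 3/2) (f := fun t => (9/2*t^1) - Real.sinh t)
      (f' := fun t => (9/2) - Real.cosh t)
      (fun t ht => by
        have hp := ((hasDerivAt_pow 1 t).const_mul ((9/2:ℝ)))
        have h2 := hp.sub (Real.hasDerivAt_sinh t)
        refine h2.congr_deriv ?_
        all_goals (beta_reduce; push_cast; ring))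
      (fun t ht => by beta_reduce; have := Vc0 t ⟨ht.1.le, ht.2.le⟩; linarith) hx
  norm_num at h
  linarith

lemma Vc1 : ∀ t ∈ Icc (0:ℝ) (3/2), Real.cosh t ≤ 1 + 9/4*t^2 := by
  intro x hx
  have h := mono_icc (a := (0:ℝ)) (b := 3/2) (f := fun t => (1 + 9/4*t^2) - Real.cosh t)
      (f' := fun t => (9/2*t^1) - Real.sinh t)
      (fun t ht => by
        have hp := (((hasDerivAt_pow 2 t).const_mul ((9/4:ℝ))).const_add 1)
        have h2 := hp.sub (Real.hasDerivAt_cosh t)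
        refine h2.congr_deriv ?_
        all_goals (beta_reduce; push_cast; ring))
      (fun t ht => by beta_reduce; have := Vs0 t ⟨ht.1.le, ht.2.le⟩; linarith) hx
  norm_num at h
  linarith

lemma Vs1 : ∀ t ∈ Icc (0:ℝ) (3/2), Real.sinh t ≤ 1*t^1 + 3/4*t^3 := by
  intro x hx
  have h := mono_icc (a := (0:ℝ)) (b := 3/2) (f := fun t => (1*t^1 + 3/4*t^3) - Real.sinh t)
      (f' := fun t => (1 + 9/4*t^2) - Real.cosh t)
      (fun t ht => by
        have hp := (((hasDerivAt_pow 1 t).const_mul ((1:ℝ))).add ((hasDerivAt_pow 3 t).const_mul ((3/4:ℝ))))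
        have h2 := hp.sub (Real.hasDerivAt_sinh t)
        refine h2.congr_deriv ?_
        all_goals (beta_reduce; push_cast; ring))
      (fun t ht => by beta_reduce; have := Vc1 t ⟨ht.1.le, ht.2.le⟩; linarith) hx
  norm_num at h
  linarith

lemma Vc2 : ∀ t ∈ Icc (0:ℝ) (3/2), Real.cosh t ≤ 1 + 1/2*t^2 + 3/16*t^4 := by
  intro x hx
  have h := mono_icc (a := (0:ℝ)) (b := 3/2) (f := fun t => (1 + 1/2*t^2 + 3/16*t^4) - Real.cosh t)
      (f' := fun t => (1*t^1 + 3/4*t^3) - Real.sinh t)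
      (fun t ht => by
        have hp := ((((hasDerivAt_pow 2 t).const_mul ((1/2:ℝ))).const_add 1).add ((hasDerivAt_pow 4 t).const_mul ((3/16:ℝ))))
        have h2 := hp.sub (Real.hasDerivAt_cosh t)
        refine h2.congr_deriv ?_
        all_goals (beta_reduce; push_cast; ring))
      (fun t ht => by beta_reduce; have := Vs1 t ⟨ht.1.le, ht.2.le⟩; linarith) hx
  norm_num at h
  linarith

lemma Vs2 : ∀ t ∈ Icc (0:ℝ) (3/2), Real.sinh t ≤ 1*t^1 + 1/6*t^3 + 3/80*t^5 := by
  intro x hx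
  have h := mono_icc (a := (0:ℝ)) (b := 3/2) (f := fun t => (1*t^1 + 1/6*t^3 + 3/80*t^5) - Real.sinh t)
      (f' := fun t => (1 + 1/2*t^2 + 3/16*t^4) - Real.cosh t)
      (fun t ht => by
        have hp := ((((hasDerivAt_pow 1 t).const_mul ((1:ℝ))).add ((hasDerivAt_pow 3 t).const_mul ((1/6:ℝ)))).add ((hasDerivAt_pow 5 t).const_mul ((3/80:ℝ))))
        have h2 := hp.sub (Real.hasDerivAt_sinh t)
        refine h2.congr_deriv ?_
        all_goals (beta_reduce; push_cast; ring))
      (fun t ht => by beta_reduce; have := Vc2 t ⟨ht.1.le, ht.2.le⟩; linarith) hx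
  norm_num at h
  linarith

lemma Vc3 : ∀ t ∈ Icc (0:ℝ) (3/2), Real.cosh t ≤ 1 + 1/2*t^2 + 1/24*t^4 + 1/160*t^6 := by
  intro x hx
  have h := mono_icc (a := (0:ℝ)) (b := 3/2) (f := fun t => (1 + 1/2*t^2 + 1/24*t^4 + 1/160*t^6) - Real.cosh t)
      (f' := fun t => (1*t^1 + 1/6*t^3 + 3/80*t^5) - Real.sinh t)
      (fun t ht => by
        have hp := (((((hasDerivAt_pow 2 t).const_mul ((1/2:ℝ))).const_add 1).add ((hasDerivAt_pow 4 t).const_mul ((1/24:ℝ)))).add ((hasDerivAt_pow 6 t).const_mul ((1/160:ℝ))))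
        have h2 := hp.sub (Real.hasDerivAt_cosh t)
        refine h2.congr_deriv ?_
        all_goals (beta_reduce; push_cast; ring))
      (fun t ht => by beta_reduce; have := Vs2 t ⟨ht.1.le, ht.2.le⟩; linarith) hx
  norm_num at h
  linarith

lemma Vs3 : ∀ t ∈ Icc (0:ℝ) (3/2), Real.sinh t ≤ 1*t^1 + 1/6*t^3 + 1/120*t^5 + 1/1120*t^7 := by
  intro x hx
  have h := mono_icc (a := (0:ℝ)) (b := 3/2) (f := fun t => (1*t^1 + 1/6*t^3 + 1/120*t^5 + 1/1120*t^7) - Real.sinh t)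
      (f' := fun t => (1 + 1/2*t^2 + 1/24*t^4 + 1/160*t^6) - Real.cosh t)
      (fun t ht => by
        have hp := (((((hasDerivAt_pow 1 t).const_mul ((1:ℝ))).add ((hasDerivAt_pow 3 t).const_mul ((1/6:ℝ)))).add ((hasDerivAt_pow 5 t).const_mul ((1/120:ℝ)))).add ((hasDerivAt_pow 7 t).const_mul ((1/1120:ℝ))))
        have h2 := hp.sub (Real.hasDerivAt_sinh t)
        refine h2.congr_deriv ?_
        all_goals (beta_reduce; push_cast; ring))
      (fun t ht => by beta_reduce; have := Vc3 t ⟨ht.1.le, ht.2.le⟩; linarith) hx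
  norm_num at h
  linarith

lemma Vc4 : ∀ t ∈ Icc (0:ℝ) (3/2), Real.cosh t ≤ 1 + 1/2*t^2 + 1/24*t^4 + 1/720*t^6 + 1/8960*t^8 := by
  intro x hx
  have h := mono_icc (a := (0:ℝ)) (b := 3/2) (f := fun t => (1 + 1/2*t^2 + 1/24*t^4 + 1/720*t^6 + 1/8960*t^8) - Real.cosh t)
      (f' := fun t => (1*t^1 + 1/6*t^3 + 1/120*t^5 + 1/1120*t^7) - Real.sinh t)
      (fun t ht => by
        have hp := ((((((hasDerivAt_pow 2 t).const_mul ((1/2:ℝ))).const_add 1).add ((hasDerivAt_pow 4 t).const_mul ((1/24:ℝ)))).add ((hasDerivAt_pow 6 t).const_mul ((1/720:ℝ)))).add ((hasDerivAt_pow 8 t).const_mul ((1/8960:ℝ))))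
        have h2 := hp.sub (Real.hasDerivAt_cosh t)
        refine h2.congr_deriv ?_
        all_goals (beta_reduce; push_cast; ring))
      (fun t ht => by beta_reduce; have := Vs3 t ⟨ht.1.le, ht.2.le⟩; linarith) hx
  norm_num at h
  linarith

lemma Us0 : ∀ t ∈ Icc (0:ℝ) (11/2), Real.sinh t ≤ 245*t^1 := by
  intro x hx
  have h := mono_icc (a := (0:ℝ)) (b := 11/2) (f := fun t => (245*t^1) - Real.sinh t)
      (f' := fun t => (245) - Real.cosh t)
      (fun t ht => by
        have hp := ((hasDerivAt_pow 1 t).const_mul ((245:ℝ)))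
        have h2 := hp.sub (Real.hasDerivAt_sinh t)
        refine h2.congr_deriv ?_
        all_goals (beta_reduce; push_cast; ring))
      (fun t ht => by beta_reduce; have := Uc0 t ⟨ht.1.le, ht.2.le⟩; linarith) hx
  norm_num at h
  linarith

lemma Uc1 : ∀ t ∈ Icc (0:ℝ) (11/2), Real.cosh t ≤ 1 + 245/2*t^2 := by
  intro x hx
  have h := mono_icc (a := (0:ℝ)) (b := 11/2) (f := fun t => (1 + 245/2*t^2) - Real.cosh t)
      (f' := fun t => (245*t^1) - Real.sinh t)
      (fun t ht => by
        have hp := (((hasDerivAt_pow 2 t).const_mul ((245/2:ℝ))).const_add 1)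
        have h2 := hp.sub (Real.hasDerivAt_cosh t)
        refine h2.congr_deriv ?_
        all_goals (beta_reduce; push_cast; ring))
      (fun t ht => by beta_reduce; have := Us0 t ⟨ht.1.le, ht.2.le⟩; linarith) hx
  norm_num at h
  linarith

lemma Us1 : ∀ t ∈ Icc (0:ℝ) (11/2), Real.sinh t ≤ 1*t^1 + 245/6*t^3 := by
  intro x hx
  have h := mono_icc (a := (0:ℝ)) (b := 11/2) (f := fun t => (1*t^1 + 245/6*t^3) - Real.sinh t)
      (f' := fun t => (1 + 245/2*t^2) - Real.cosh t)
      (fun t ht => by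
        have hp := (((hasDerivAt_pow 1 t).const_mul ((1:ℝ))).add ((hasDerivAt_pow 3 t).const_mul ((245/6:ℝ))))
        have h2 := hp.sub (Real.hasDerivAt_sinh t)
        refine h2.congr_deriv ?_
        all_goals (beta_reduce; push_cast; ring))
      (fun t ht => by beta_reduce; have := Uc1 t ⟨ht.1.le, ht.2.le⟩; linarith) hx
  norm_num at h
  linarith

lemma Uc2 : ∀ t ∈ Icc (0:ℝ) (11/2), Real.cosh t ≤ 1 + 1/2*t^2 + 245/24*t^4 := by
  intro x hx
  have h := mono_icc (a := (0:ℝ)) (b := 11/2) (f := fun t => (1 + 1/2*t^2 + 245/24*t^4) - Real.cosh t)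
      (f' := fun t => (1*t^1 + 245/6*t^3) - Real.sinh t)
      (fun t ht => by
        have hp := ((((hasDerivAt_pow 2 t).const_mul ((1/2:ℝ))).const_add 1).add ((hasDerivAt_pow 4 t).const_mul ((245/24:ℝ))))
        have h2 := hp.sub (Real.hasDerivAt_cosh t)
        refine h2.congr_deriv ?_
        all_goals (beta_reduce; push_cast; ring))
      (fun t ht => by beta_reduce; have := Us1 t ⟨ht.1.le, ht.2.le⟩; linarith) hx
  norm_num at h
  linarith

lemma Us2 : ∀ t ∈ Icc (0:ℝ) (11/2), Real.sinh t ≤ 1*t^1 + 1/6*t^3 + 49/24*t^5 := by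
  intro x hx
  have h := mono_icc (a := (0:ℝ)) (b := 11/2) (f := fun t => (1*t^1 + 1/6*t^3 + 49/24*t^5) - Real.sinh t)
      (f' := fun t => (1 + 1/2*t^2 + 245/24*t^4) - Real.cosh t)
      (fun t ht => by
        have hp := ((((hasDerivAt_pow 1 t).const_mul ((1:ℝ))).add ((hasDerivAt_pow 3 t).const_mul ((1/6:ℝ)))).add ((hasDerivAt_pow 5 t).const_mul ((49/24:ℝ))))
        have h2 := hp.sub (Real.hasDerivAt_sinh t)
        refine h2.congr_deriv ?_
        all_goals (beta_reduce; push_cast; ring))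
      (fun t ht => by beta_reduce; have := Uc2 t ⟨ht.1.le, ht.2.le⟩; linarith) hx
  norm_num at h
  linarith

lemma Uc3 : ∀ t ∈ Icc (0:ℝ) (11/2), Real.cosh t ≤ 1 + 1/2*t^2 + 1/24*t^4 + 49/144*t^6 := by
  intro x hx
  have h := mono_icc (a := (0:ℝ)) (b := 11/2) (f := fun t => (1 + 1/2*t^2 + 1/24*t^4 + 49/144*t^6) - Real.cosh t)
      (f' := fun t => (1*t^1 + 1/6*t^3 + 49/24*t^5) - Real.sinh t)
      (fun t ht => by
        have hp := (((((hasDerivAt_pow 2 t).const_mul ((1/2:ℝ))).const_add 1).add ((hasDerivAt_pow 4 t).const_mul ((1/24:ℝ)))).add ((hasDerivAt_pow 6 t).const_mul ((49/144:ℝ))))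
        have h2 := hp.sub (Real.hasDerivAt_cosh t)
        refine h2.congr_deriv ?_
        all_goals (beta_reduce; push_cast; ring))
      (fun t ht => by beta_reduce; have := Us2 t ⟨ht.1.le, ht.2.le⟩; linarith) hx
  norm_num at h
  linarith

lemma Us3 : ∀ t ∈ Icc (0:ℝ) (11/2), Real.sinh t ≤ 1*t^1 + 1/6*t^3 + 1/120*t^5 + 7/144*t^7 := by
  intro x hx
  have h := mono_icc (a := (0:ℝ)) (b := 11/2) (f := fun t => (1*t^1 + 1/6*t^3 + 1/120*t^5 + 7/144*t^7) - Real.sinh t)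
      (f' := fun t => (1 + 1/2*t^2 + 1/24*t^4 + 49/144*t^6) - Real.cosh t)
      (fun t ht => by
        have hp := (((((hasDerivAt_pow 1 t).const_mul ((1:ℝ))).add ((hasDerivAt_pow 3 t).const_mul ((1/6:ℝ)))).add ((hasDerivAt_pow 5 t).const_mul ((1/120:ℝ)))).add ((hasDerivAt_pow 7 t).const_mul ((7/144:ℝ))))
        have h2 := hp.sub (Real.hasDerivAt_sinh t)
        refine h2.congr_deriv ?_
        all_goals (beta_reduce; push_cast; ring))
      (fun t ht => by beta_reduce; have := Uc3 t ⟨ht.1.le, ht.2.le⟩; linarith) hx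
  norm_num at h
  linarith

lemma Uc4 : ∀ t ∈ Icc (0:ℝ) (11/2), Real.cosh t ≤ 1 + 1/2*t^2 + 1/24*t^4 + 1/720*t^6 + 7/1152*t^8 := by
  intro x hx
  have h := mono_icc (a := (0:ℝ)) (b := 11/2) (f := fun t => (1 + 1/2*t^2 + 1/24*t^4 + 1/720*t^6 + 7/1152*t^8) - Real.cosh t)
      (f' := fun t => (1*t^1 + 1/6*t^3 + 1/120*t^5 + 7/144*t^7) - Real.sinh t)
      (fun t ht => by
        have hp := ((((((hasDerivAt_pow 2 t).const_mul ((1/2:ℝ))).const_add 1).add ((hasDerivAt_pow 4 t).const_mul ((1/24:ℝ)))).add ((hasDerivAt_pow 6 t).const_mul ((1/720:ℝ)))).add ((hasDerivAt_pow 8 t).const_mul ((7/1152:ℝ))))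
        have h2 := hp.sub (Real.hasDerivAt_cosh t)
        refine h2.congr_deriv ?_
        all_goals (beta_reduce; push_cast; ring))
      (fun t ht => by beta_reduce; have := Us3 t ⟨ht.1.le, ht.2.le⟩; linarith) hx
  norm_num at h
  linarith

lemma Us4 : ∀ t ∈ Icc (0:ℝ) (11/2), Real.sinh t ≤ 1*t^1 + 1/6*t^3 + 1/120*t^5 + 1/5040*t^7 + 7/10368*t^9 := by
  intro x hx
  have h := mono_icc (a := (0:ℝ)) (b := 11/2) (f := fun t => (1*t^1 + 1/6*t^3 + 1/120*t^5 + 1/5040*t^7 + 7/10368*t^9) - Real.sinh t)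
      (f' := fun t => (1 + 1/2*t^2 + 1/24*t^4 + 1/720*t^6 + 7/1152*t^8) - Real.cosh t)
      (fun t ht => by
        have hp := ((((((hasDerivAt_pow 1 t).const_mul ((1:ℝ))).add ((hasDerivAt_pow 3 t).const_mul ((1/6:ℝ)))).add ((hasDerivAt_pow 5 t).const_mul ((1/120:ℝ)))).add ((hasDerivAt_pow 7 t).const_mul ((1/5040:ℝ)))).add ((hasDerivAt_pow 9 t).const_mul ((7/10368:ℝ))))
        have h2 := hp.sub (Real.hasDerivAt_sinh t)
        refine h2.congr_deriv ?_
        all_goals (beta_reduce; push_cast; ring))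
      (fun t ht => by beta_reduce; have := Uc4 t ⟨ht.1.le, ht.2.le⟩; linarith) hx
  norm_num at h
  linarith

lemma Uc5 : ∀ t ∈ Icc (0:ℝ) (11/2), Real.cosh t ≤ 1 + 1/2*t^2 + 1/24*t^4 + 1/720*t^6 + 1/40320*t^8 + 7/103680*t^10 := by
  intro x hx
  have h := mono_icc (a := (0:ℝ)) (b := 11/2) (f := fun t => (1 + 1/2*t^2 + 1/24*t^4 + 1/720*t^6 + 1/40320*t^8 + 7/103680*t^10) - Real.cosh t)
      (f' := fun t => (1*t^1 + 1/6*t^3 + 1/120*t^5 + 1/5040*t^7 + 7/10368*t^9) - Real.sinh t)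
      (fun t ht => by
        have hp := (((((((hasDerivAt_pow 2 t).const_mul ((1/2:ℝ))).const_add 1).add ((hasDerivAt_pow 4 t).const_mul ((1/24:ℝ)))).add ((hasDerivAt_pow 6 t).const_mul ((1/720:ℝ)))).add ((hasDerivAt_pow 8 t).const_mul ((1/40320:ℝ)))).add ((hasDerivAt_pow 10 t).const_mul ((7/103680:ℝ))))
        have h2 := hp.sub (Real.hasDerivAt_cosh t)
        refine h2.congr_deriv ?_
        all_goals (beta_reduce; push_cast; ring))
      (fun t ht => by beta_reduce; have := Us4 t ⟨ht.1.le, ht.2.le⟩; linarith) hx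
  norm_num at h
  linarith

lemma Us5 : ∀ t ∈ Icc (0:ℝ) (11/2), Real.sinh t ≤ 1*t^1 + 1/6*t^3 + 1/120*t^5 + 1/5040*t^7 + 1/362880*t^9 + 7/1140480*t^11 := by
  intro x hx
  have h := mono_icc (a := (0:ℝ)) (b := 11/2) (f := fun t => (1*t^1 + 1/6*t^3 + 1/120*t^5 + 1/5040*t^7 + 1/362880*t^9 + 7/1140480*t^11) - Real.sinh t)
      (f' := fun t => (1 + 1/2*t^2 + 1/24*t^4 + 1/720*t^6 + 1/40320*t^8 + 7/103680*t^10) - Real.cosh t)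
      (fun t ht => by
        have hp := (((((((hasDerivAt_pow 1 t).const_mul ((1:ℝ))).add ((hasDerivAt_pow 3 t).const_mul ((1/6:ℝ)))).add ((hasDerivAt_pow 5 t).const_mul ((1/120:ℝ)))).add ((hasDerivAt_pow 7 t).const_mul ((1/5040:ℝ)))).add ((hasDerivAt_pow 9 t).const_mul ((1/362880:ℝ)))).add ((hasDerivAt_pow 11 t).const_mul ((7/1140480:ℝ))))
        have h2 := hp.sub (Real.hasDerivAt_sinh t)
        refine h2.congr_deriv ?_
        all_goals (beta_reduce; push_cast; ring))
      (fun t ht => by beta_reduce; have := Uc5 t ⟨ht.1.le, ht.2.le⟩; linarith) hx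
  norm_num at h
  linarith

lemma Uc6 : ∀ t ∈ Icc (0:ℝ) (11/2), Real.cosh t ≤ 1 + 1/2*t^2 + 1/24*t^4 + 1/720*t^6 + 1/40320*t^8 + 1/3628800*t^10 + 7/13685760*t^12 := by
  intro x hx
  have h := mono_icc (a := (0:ℝ)) (b := 11/2) (f := fun t => (1 + 1/2*t^2 + 1/24*t^4 + 1/720*t^6 + 1/40320*t^8 + 1/3628800*t^10 + 7/13685760*t^12) - Real.cosh t)
      (f' := fun t => (1*t^1 + 1/6*t^3 + 1/120*t^5 + 1/5040*t^7 + 1/362880*t^9 + 7/1140480*t^11) - Real.sinh t)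
      (fun t ht => by
        have hp := ((((((((hasDerivAt_pow 2 t).const_mul ((1/2:ℝ))).const_add 1).add ((hasDerivAt_pow 4 t).const_mul ((1/24:ℝ)))).add ((hasDerivAt_pow 6 t).const_mul ((1/720:ℝ)))).add ((hasDerivAt_pow 8 t).const_mul ((1/40320:ℝ)))).add ((hasDerivAt_pow 10 t).const_mul ((1/3628800:ℝ)))).add ((hasDerivAt_pow 12 t).const_mul ((7/13685760:ℝ))))
        have h2 := hp.sub (Real.hasDerivAt_cosh t)
        refine h2.congr_deriv ?_
        all_goals (beta_reduce; push_cast; ring))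
      (fun t ht => by beta_reduce; have := Us5 t ⟨ht.1.le, ht.2.le⟩; linarith) hx
  norm_num at h
  linarith

lemma Us6 : ∀ t ∈ Icc (0:ℝ) (11/2), Real.sinh t ≤ 1*t^1 + 1/6*t^3 + 1/120*t^5 + 1/5040*t^7 + 1/362880*t^9 + 1/39916800*t^11 + 7/177914880*t^13 := by
  intro x hx
  have h := mono_icc (a := (0:ℝ)) (b := 11/2) (f := fun t => (1*t^1 + 1/6*t^3 + 1/120*t^5 + 1/5040*t^7 + 1/362880*t^9 + 1/39916800*t^11 + 7/177914880*t^13) - Real.sinh t)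
      (f' := fun t => (1 + 1/2*t^2 + 1/24*t^4 + 1/720*t^6 + 1/40320*t^8 + 1/3628800*t^10 + 7/13685760*t^12) - Real.cosh t)
      (fun t ht => by
        have hp := ((((((((hasDerivAt_pow 1 t).const_mul ((1:ℝ))).add ((hasDerivAt_pow 3 t).const_mul ((1/6:ℝ)))).add ((hasDerivAt_pow 5 t).const_mul ((1/120:ℝ)))).add ((hasDerivAt_pow 7 t).const_mul ((1/5040:ℝ)))).add ((hasDerivAt_pow 9 t).const_mul ((1/362880:ℝ)))).add ((hasDerivAt_pow 11 t).const_mul ((1/39916800:ℝ)))).add ((hasDerivAt_pow 13 t).const_mul ((7/177914880:ℝ))))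
        have h2 := hp.sub (Real.hasDerivAt_sinh t)
        refine h2.congr_deriv ?_
        all_goals (beta_reduce; push_cast; ring))
      (fun t ht => by beta_reduce; have := Uc6 t ⟨ht.1.le, ht.2.le⟩; linarith) hx
  norm_num at h
  linarith

lemma Uc7 : ∀ t ∈ Icc (0:ℝ) (11/2), Real.cosh t ≤ 1 + 1/2*t^2 + 1/24*t^4 + 1/720*t^6 + 1/40320*t^8 + 1/3628800*t^10 + 1/479001600*t^12 + 1/355829760*t^14 := by
  intro x hx
  have h := mono_icc (a := (0:ℝ)) (b := 11/2) (f := fun t => (1 + 1/2*t^2 + 1/24*t^4 + 1/720*t^6 + 1/40320*t^8 + 1/3628800*t^10 + 1/479001600*t^12 + 1/355829760*t^14) - Real.cosh t)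
      (f' := fun t => (1*t^1 + 1/6*t^3 + 1/120*t^5 + 1/5040*t^7 + 1/362880*t^9 + 1/39916800*t^11 + 7/177914880*t^13) - Real.sinh t)
      (fun t ht => by
        have hp := (((((((((hasDerivAt_pow 2 t).const_mul ((1/2:ℝ))).const_add 1).add ((hasDerivAt_pow 4 t).const_mul ((1/24:ℝ)))).add ((hasDerivAt_pow 6 t).const_mul ((1/720:ℝ)))).add ((hasDerivAt_pow 8 t).const_mul ((1/40320:ℝ)))).add ((hasDerivAt_pow 10 t).const_mul ((1/3628800:ℝ)))).add ((hasDerivAt_pow 12 t).const_mul ((1/479001600:ℝ)))).add ((hasDerivAt_pow 14 t).const_mul ((1/355829760:ℝ))))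
        have h2 := hp.sub (Real.hasDerivAt_cosh t)
        refine h2.congr_deriv ?_
        all_goals (beta_reduce; push_cast; ring))
      (fun t ht => by beta_reduce; have := Us6 t ⟨ht.1.le, ht.2.le⟩; linarith) hx
  norm_num at h
  linarith

lemma Us7 : ∀ t ∈ Icc (0:ℝ) (11/2), Real.sinh t ≤ 1*t^1 + 1/6*t^3 + 1/120*t^5 + 1/5040*t^7 + 1/362880*t^9 + 1/39916800*t^11 + 1/6227020800*t^13 + 1/5337446400*t^15 := by
  intro x hx
  have h := mono_icc (a := (0:ℝ)) (b := 11/2) (f := fun t => (1*t^1 + 1/6*t^3 + 1/120*t^5 + 1/5040*t^7 + 1/362880*t^9 + 1/39916800*t^11 + 1/6227020800*t^13 + 1/5337446400*t^15) - Real.sinh t)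
      (f' := fun t => (1 + 1/2*t^2 + 1/24*t^4 + 1/720*t^6 + 1/40320*t^8 + 1/3628800*t^10 + 1/479001600*t^12 + 1/355829760*t^14) - Real.cosh t)
      (fun t ht => by
        have hp := (((((((((hasDerivAt_pow 1 t).const_mul ((1:ℝ))).add ((hasDerivAt_pow 3 t).const_mul ((1/6:ℝ)))).add ((hasDerivAt_pow 5 t).const_mul ((1/120:ℝ)))).add ((hasDerivAt_pow 7 t).const_mul ((1/5040:ℝ)))).add ((hasDerivAt_pow 9 t).const_mul ((1/362880:ℝ)))).add ((hasDerivAt_pow 11 t).const_mul ((1/39916800:ℝ)))).add ((hasDerivAt_pow 13 t).const_mul ((1/6227020800:ℝ)))).add ((hasDerivAt_pow 15 t).const_mul ((1/5337446400:ℝ))))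
        have h2 := hp.sub (Real.hasDerivAt_sinh t)
        refine h2.congr_deriv ?_
        all_goals (beta_reduce; push_cast; ring))
      (fun t ht => by beta_reduce; have := Uc7 t ⟨ht.1.le, ht.2.le⟩; linarith) hx
  norm_num at h
  linarith

lemma Uc8 : ∀ t ∈ Icc (0:ℝ) (11/2), Real.cosh t ≤ 1 + 1/2*t^2 + 1/24*t^4 + 1/720*t^6 + 1/40320*t^8 + 1/3628800*t^10 + 1/479001600*t^12 + 1/87178291200*t^14 + 1/85399142400*t^16 := by
  intro x hx
  have h := mono_icc (a := (0:ℝ)) (b := 11/2) (f := fun t => (1 + 1/2*t^2 + 1/24*t^4 + 1/720*t^6 + 1/40320*t^8 + 1/3628800*t^10 + 1/479001600*t^12 + 1/87178291200*t^14 + 1/85399142400*t^16) - Real.cosh t)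
      (f' := fun t => (1*t^1 + 1/6*t^3 + 1/120*t^5 + 1/5040*t^7 + 1/362880*t^9 + 1/39916800*t^11 + 1/6227020800*t^13 + 1/5337446400*t^15) - Real.sinh t)
      (fun t ht => by
        have hp := ((((((((((hasDerivAt_pow 2 t).const_mul ((1/2:ℝ))).const_add 1).add ((hasDerivAt_pow 4 t).const_mul ((1/24:ℝ)))).add ((hasDerivAt_pow 6 t).const_mul ((1/720:ℝ)))).add ((hasDerivAt_pow 8 t).const_mul ((1/40320:ℝ)))).add ((hasDerivAt_pow 10 t).const_mul ((1/3628800:ℝ)))).add ((hasDerivAt_pow 12 t).const_mul ((1/479001600:ℝ)))).add ((hasDerivAt_pow 14 t).const_mul ((1/87178291200:ℝ)))).add ((hasDerivAt_pow 16 t).const_mul ((1/85399142400:ℝ))))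
        have h2 := hp.sub (Real.hasDerivAt_cosh t)
        refine h2.congr_deriv ?_
        all_goals (beta_reduce; push_cast; ring))
      (fun t ht => by beta_reduce; have := Us7 t ⟨ht.1.le, ht.2.le⟩; linarith) hx
  norm_num at h
  linarith

lemma Us8 : ∀ t ∈ Icc (0:ℝ) (11/2), Real.sinh t ≤ 1*t^1 + 1/6*t^3 + 1/120*t^5 + 1/5040*t^7 + 1/362880*t^9 + 1/39916800*t^11 + 1/6227020800*t^13 + 1/1307674368000*t^15 + 1/1451785420800*t^17 := by
  intro x hx
  have h := mono_icc (a := (0:ℝ)) (b := 11/2) (f := fun t => (1*t^1 + 1/6*t^3 + 1/120*t^5 + 1/5040*t^7 + 1/362880*t^9 + 1/39916800*t^11 + 1/6227020800*t^13 + 1/1307674368000*t^15 + 1/1451785420800*t^17) - Real.sinh t)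
      (f' := fun t => (1 + 1/2*t^2 + 1/24*t^4 + 1/720*t^6 + 1/40320*t^8 + 1/3628800*t^10 + 1/479001600*t^12 + 1/87178291200*t^14 + 1/85399142400*t^16) - Real.cosh t)
      (fun t ht => by
        have hp := ((((((((((hasDerivAt_pow 1 t).const_mul ((1:ℝ))).add ((hasDerivAt_pow 3 t).const_mul ((1/6:ℝ)))).add ((hasDerivAt_pow 5 t).const_mul ((1/120:ℝ)))).add ((hasDerivAt_pow 7 t).const_mul ((1/5040:ℝ)))).add ((hasDerivAt_pow 9 t).const_mul ((1/362880:ℝ)))).add ((hasDerivAt_pow 11 t).const_mul ((1/39916800:ℝ)))).add ((hasDerivAt_pow 13 t).const_mul ((1/6227020800:ℝ)))).add ((hasDerivAt_pow 15 t).const_mul ((1/1307674368000:ℝ)))).add ((hasDerivAt_pow 17 t).const_mul ((1/1451785420800:ℝ))))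
        have h2 := hp.sub (Real.hasDerivAt_sinh t)
        refine h2.congr_deriv ?_
        all_goals (beta_reduce; push_cast; ring))
      (fun t ht => by beta_reduce; have := Uc8 t ⟨ht.1.le, ht.2.le⟩; linarith) hx
  norm_num at h
  linarith

lemma Uc9 : ∀ t ∈ Icc (0:ℝ) (11/2), Real.cosh t ≤ 1 + 1/2*t^2 + 1/24*t^4 + 1/720*t^6 + 1/40320*t^8 + 1/3628800*t^10 + 1/479001600*t^12 + 1/87178291200*t^14 + 1/20922789888000*t^16 + 1/26132137574400*t^18 := by
  intro x hx
  have h := mono_icc (a := (0:ℝ)) (b := 11/2) (f := fun t => (1 + 1/2*t^2 + 1/24*t^4 + 1/720*t^6 + 1/40320*t^8 + 1/3628800*t^10 + 1/479001600*t^12 + 1/87178291200*t^14 + 1/20922789888000*t^16 + 1/26132137574400*t^18) - Real.cosh t)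
      (f' := fun t => (1*t^1 + 1/6*t^3 + 1/120*t^5 + 1/5040*t^7 + 1/362880*t^9 + 1/39916800*t^11 + 1/6227020800*t^13 + 1/1307674368000*t^15 + 1/1451785420800*t^17) - Real.sinh t)
      (fun t ht => by
        have hp := (((((((((((hasDerivAt_pow 2 t).const_mul ((1/2:ℝ))).const_add 1).add ((hasDerivAt_pow 4 t).const_mul ((1/24:ℝ)))).add ((hasDerivAt_pow 6 t).const_mul ((1/720:ℝ)))).add ((hasDerivAt_pow 8 t).const_mul ((1/40320:ℝ)))).add ((hasDerivAt_pow 10 t).const_mul ((1/3628800:ℝ)))).add ((hasDerivAt_pow 12 t).const_mul ((1/479001600:ℝ)))).add ((hasDerivAt_pow 14 t).const_mul ((1/87178291200:ℝ)))).add ((hasDerivAt_pow 16 t).const_mul ((1/20922789888000:ℝ)))).add ((hasDerivAt_pow 18 t).const_mul ((1/26132137574400:ℝ))))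
        have h2 := hp.sub (Real.hasDerivAt_cosh t)
        refine h2.congr_deriv ?_
        all_goals (beta_reduce; push_cast; ring))
      (fun t ht => by beta_reduce; have := Us8 t ⟨ht.1.le, ht.2.le⟩; linarith) hx
  norm_num at h
  linarith

noncomputable def Rpoly (y : ℝ) : ℝ := 46/1575 + (-4363/18144000)*y^1 + (-343481/181440000)*y^2 + (-843811/2177280000)*y^3 + (-67865593/1371686400000)*y^4 + (-206249/41803776000)*y^5 + (-2244967/5878656000000)*y^6 + (-10336979/423263232000000)*y^7 + (-351233/264539520000000)*y^8 + (-13839169/237027409920000000)*y^9 + (-1390051/632073093120000000)*y^10 + (-253/3745618329600000)*y^11 + (-23/16184770560000000)*y^12 + (-23/776868986880000000)*y^13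

lemma Rpoly_pos {y : ℝ} (hy0 : 0 ≤ y) (hy : y ≤ 9/4) : 0 < Rpoly y := by
  have h94 : (0:ℝ) ≤ 9/4 := by norm_num
  have hk1 : y^1 ≤ (9/4:ℝ)^1 := pow_le_pow_left₀ hy0 hy 1
  have hk2 : y^2 ≤ (9/4:ℝ)^2 := pow_le_pow_left₀ hy0 hy 2
  have hk3 : y^3 ≤ (9/4:ℝ)^3 := pow_le_pow_left₀ hy0 hy 3
  have hk4 : y^4 ≤ (9/4:ℝ)^4 := pow_le_pow_left₀ hy0 hy 4
  have hk5 : y^5 ≤ (9/4:ℝ)^5 := pow_le_pow_left₀ hy0 hy 5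
  have hk6 : y^6 ≤ (9/4:ℝ)^6 := pow_le_pow_left₀ hy0 hy 6
  have hk7 : y^7 ≤ (9/4:ℝ)^7 := pow_le_pow_left₀ hy0 hy 7
  have hk8 : y^8 ≤ (9/4:ℝ)^8 := pow_le_pow_left₀ hy0 hy 8
  have hk9 : y^9 ≤ (9/4:ℝ)^9 := pow_le_pow_left₀ hy0 hy 9
  have hk10 : y^10 ≤ (9/4:ℝ)^10 := pow_le_pow_left₀ hy0 hy 10
  have hk11 : y^11 ≤ (9/4:ℝ)^11 := pow_le_pow_left₀ hy0 hy 11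
  have hk12 : y^12 ≤ (9/4:ℝ)^12 := pow_le_pow_left₀ hy0 hy 12
  have hk13 : y^13 ≤ (9/4:ℝ)^13 := pow_le_pow_left₀ hy0 hy 13
  unfold Rpoly
  nlinarith [hk1, hk2, hk3, hk4, hk5, hk6, hk7, hk8, hk9, hk10, hk11, hk12, hk13]

set_option maxHeartbeats 4000000 in
lemma key_small {t : ℝ} (h0 : 0 < t) (h1 : t ≤ 3/2) :
    3 * Real.cosh t ^ ((7:ℝ)/15) * (t*Real.cosh t - Real.sinh t) < t * Real.sinh t^2 := by
  have hs3 := sinh_lb3 t h0.le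
  have hc3 := cosh_lb3 t h0.le
  have hc4 := Vc4 t ⟨h0.le, h1⟩
  have hcosh1 := Real.one_le_cosh t
  have hu : (0:ℝ) ≤ Real.cosh t - 1 := by linarith
  have hT := rpow715_T3 (Real.cosh t - 1) hu
  rw [show (1:ℝ) + (Real.cosh t - 1) = Real.cosh t by ring] at hT
  have e1 : Real.cosh t - 1 ≤ (1 + 1/2*t^2 + 1/24*t^4 + 1/720*t^6 + 1/8960*t^8) - 1 := by linarith
  have eL0 : (0:ℝ) ≤ (1 + 1/2*t^2 + 1/24*t^4 + 1/720*t^6) - 1 := by nlinarith [sq_nonneg t, sq_nonneg (t^2), sq_nonneg (t^3)]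
  have eL : (1 + 1/2*t^2 + 1/24*t^4 + 1/720*t^6) - 1 ≤ Real.cosh t - 1 := by linarith
  have e2 : ((1 + 1/2*t^2 + 1/24*t^4 + 1/720*t^6) - 1)^2 ≤ (Real.cosh t - 1)^2 := pow_le_pow_left₀ eL0 eL 2
  have e3 : (Real.cosh t - 1)^3 ≤ ((1 + 1/2*t^2 + 1/24*t^4 + 1/720*t^6 + 1/8960*t^8) - 1)^3 := pow_le_pow_left₀ hu e1 3
  have hA : Real.cosh t ^ ((7:ℝ)/15) ≤ 1 + 7/15*((1 + 1/2*t^2 + 1/24*t^4 + 1/720*t^6 + 1/8960*t^8) - 1) - 28/225*((1 + 1/2*t^2 + 1/24*t^4 + 1/720*t^6) - 1)^2 + 644/10125*((1 + 1/2*t^2 + 1/24*t^4 + 1/720*t^6 + 1/8960*t^8) - 1)^3 := by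
    linarith
  have hB0 : (0:ℝ) ≤ t*Real.cosh t - Real.sinh t := by linarith [tcs t h0.le]
  have htc : t*Real.cosh t ≤ t*(1 + 1/2*t^2 + 1/24*t^4 + 1/720*t^6 + 1/8960*t^8) := mul_le_mul_of_nonneg_left hc4 h0.le
  have hB : t*Real.cosh t - Real.sinh t ≤ t*(1 + 1/2*t^2 + 1/24*t^4 + 1/720*t^6 + 1/8960*t^8) - (1*t^1 + 1/6*t^3 + 1/120*t^5 + 1/5040*t^7) := by linarith
  have hA0 : (0:ℝ) ≤ Real.cosh t ^ ((7:ℝ)/15) := Real.rpow_nonneg (Real.cosh_pos t).le _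
  have hTM0 := le_trans hA0 hA
  have hprod : Real.cosh t ^ ((7:ℝ)/15) * (t*Real.cosh t - Real.sinh t) ≤ (1 + 7/15*((1 + 1/2*t^2 + 1/24*t^4 + 1/720*t^6 + 1/8960*t^8) - 1) - 28/225*((1 + 1/2*t^2 + 1/24*t^4 + 1/720*t^6) - 1)^2 + 644/10125*((1 + 1/2*t^2 + 1/24*t^4 + 1/720*t^6 + 1/8960*t^8) - 1)^3) * (t*(1 + 1/2*t^2 + 1/24*t^4 + 1/720*t^6 + 1/8960*t^8) - (1*t^1 + 1/6*t^3 + 1/120*t^5 + 1/5040*t^7)) := mul_le_mul hA hB hB0 hTM0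
  have hid : 3*((1 + 7/15*((1 + 1/2*t^2 + 1/24*t^4 + 1/720*t^6 + 1/8960*t^8) - 1) - 28/225*((1 + 1/2*t^2 + 1/24*t^4 + 1/720*t^6) - 1)^2 + 644/10125*((1 + 1/2*t^2 + 1/24*t^4 + 1/720*t^6 + 1/8960*t^8) - 1)^3) * (t*(1 + 1/2*t^2 + 1/24*t^4 + 1/720*t^6 + 1/8960*t^8) - (1*t^1 + 1/6*t^3 + 1/120*t^5 + 1/5040*t^7))) = t*(1*t^1 + 1/6*t^3 + 1/120*t^5 + 1/5040*t^7)^2 - t^7 * Rpoly (t^2) := by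
    unfold Rpoly; ring
  have hy0 : (0:ℝ) ≤ t^2 := sq_nonneg t
  have hy : t^2 ≤ 9/4 := by nlinarith
  have hR := Rpoly_pos hy0 hy
  have hR7 : 0 < t^7 * Rpoly (t^2) := mul_pos (by positivity) hR
  have hSL0 : (0:ℝ) ≤ (1*t^1 + 1/6*t^3 + 1/120*t^5 + 1/5040*t^7) := by nlinarith [pow_pos h0 1, pow_pos h0 3, pow_pos h0 5, pow_pos h0 7]
  have hsq : (1*t^1 + 1/6*t^3 + 1/120*t^5 + 1/5040*t^7)^2 ≤ Real.sinh t^2 := pow_le_pow_left₀ hSL0 hs3 2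
  have hfin : t*(1*t^1 + 1/6*t^3 + 1/120*t^5 + 1/5040*t^7)^2 ≤ t*Real.sinh t^2 := mul_le_mul_of_nonneg_left hsq h0.le
  linarith

lemma rpow715K (c K : ℝ) (hc : 1 ≤ c) (hK : 0 < K) (h : c^(7:ℕ) ≤ K^(15:ℕ)) : c ^ ((7:ℝ)/15) ≤ K := by
  have h1 : (c ^ ((7:ℝ)/15))^(15:ℕ) = c^(7:ℕ) := by
    rw [← Real.rpow_natCast (c ^ ((7:ℝ)/15)) 15, ← Real.rpow_mul (by linarith),
      show (7:ℝ)/15 * ((15:ℕ):ℝ) = ((7:ℕ):ℝ) by push_cast; norm_num, Real.rpow_natCast]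
  refine le_of_pow_le_pow_left₀ (n := 15) (by norm_num) hK.le ?_
  rw [h1]; exact h

lemma seg (a b K : ℝ) (ha : 0 < a) (hab : a ≤ b) (hK : Real.cosh b ^ ((7:ℝ)/15) ≤ K)
    (h1 : 0 < Real.sinh a + a*(2*Real.cosh a - 3*K)) (h2 : 0 < Real.sinh a + b*(2*Real.cosh a - 3*K))
    (h3 : 0 < a * Real.sinh a^2 - 3*K*(a*Real.cosh a - Real.sinh a))
    {t : ℝ} (hta : a ≤ t) (htb : t ≤ b) :
    3 * Real.cosh t ^ ((7:ℝ)/15) * (t*Real.cosh t - Real.sinh t) < t * Real.sinh t^2 := by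
  have ht0 : 0 < t := lt_of_lt_of_le ha hta
  have hKpos : 0 < K := lt_of_lt_of_le (Real.rpow_pos_of_pos (Real.cosh_pos b) _) hK
  have hg := mono_icc (a := a) (b := b)
      (f := fun s => s * Real.sinh s^2 - 3*K*(s*Real.cosh s - Real.sinh s))
      (f' := fun s => Real.sinh s^2 + s*(2*Real.sinh s*Real.cosh s) - 3*K*(s*Real.sinh s))
      (fun s hs => by
        have hd1 : HasDerivAt (fun s : ℝ => s * Real.sinh s^2) (1*Real.sinh s^2 + s*(2*Real.sinh s^1*Real.cosh s)) s := by
          have := (hasDerivAt_id s).mul ((Real.hasDerivAt_sinh s).pow 2)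
          refine this.congr_deriv ?_
          simp only [id_eq, Pi.pow_apply]
          all_goals (try (funext y; simp [id]))
          all_goals (beta_reduce; push_cast; ring)
        have hd2 : HasDerivAt (fun s : ℝ => 3*K*(s*Real.cosh s - Real.sinh s)) (3*K*(1*Real.cosh s + s*Real.sinh s - Real.cosh s)) s := by
          have := (((hasDerivAt_id s).mul (Real.hasDerivAt_cosh s)).sub (Real.hasDerivAt_sinh s)).const_mul (3*K)
          refine this.congr_deriv ?_
          simp only [id_eq, Pi.pow_apply]
          all_goals (try (funext y; simp [id]))
          all_goals (beta_reduce; push_cast; ring)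
        have := hd1.sub hd2
        refine this.congr_deriv ?_
        all_goals (beta_reduce; push_cast; ring))
      (fun s hs => by
        beta_reduce
        have hsa : Real.sinh a ≤ Real.sinh s := Real.sinh_le_sinh.mpr hs.1.le
        have hca : Real.cosh a ≤ Real.cosh s := by
          rw [Real.cosh_le_cosh, abs_of_nonneg ha.le, abs_of_nonneg (ha.trans hs.1).le]
          exact hs.1.le
        have hs0 : 0 < Real.sinh s := by
          rw [← Real.sinh_zero]; exact Real.sinh_lt_sinh.mpr (ha.trans hs.1)
        have hfac : 0 < Real.sinh s + s*(2*Real.cosh s - 3*K) := by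
          rcases le_or_gt 0 (2*Real.cosh a - 3*K) with hc | hc
          · nlinarith [hs.1, hs.2]
          · nlinarith [hs.1, hs.2]
        nlinarith [hs0, hfac, (ha.trans hs.1)])
      (x := t) ⟨hta, htb⟩
  beta_reduce at hg
  have hKt : Real.cosh t ^ ((7:ℝ)/15) ≤ K := by
    have hcb : Real.cosh t ≤ Real.cosh b := by
      rw [Real.cosh_le_cosh, abs_of_nonneg ht0.le, abs_of_nonneg (lt_of_lt_of_le ha hab).le]
      exact htb
    exact le_trans (Real.rpow_le_rpow (Real.cosh_pos t).le hcb (by norm_num)) hK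
  have hB0 : 0 ≤ t*Real.cosh t - Real.sinh t := by linarith [tcs t ht0.le]
  have hmul : Real.cosh t ^ ((7:ℝ)/15) * (t*Real.cosh t - Real.sinh t) ≤ K * (t*Real.cosh t - Real.sinh t) :=
    mul_le_mul_of_nonneg_right hKt hB0
  nlinarith [hg, h3, hmul]
lemma seg1 : ∀ t:ℝ, 3/2 ≤ t → t ≤ 33/20 → 3 * Real.cosh t ^ ((7:ℝ)/15) * (t*Real.cosh t - Real.sinh t) < t * Real.sinh t^2 := by
  intro t hta htb
  have hσ : (5323/2500:ℝ) ≤ Real.sinh (3/2) := by have h := sinh_lb5 (3/2) (by norm_num); norm_num at h; linarith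
  have hγ : (5881/2500:ℝ) ≤ Real.cosh (3/2) := by have h := cosh_lb6 (3/2) (by norm_num); norm_num at h; linarith
  have hγ' : Real.cosh (3/2) ≤ (941/400:ℝ) := by have h := Uc9 (3/2) (by constructor <;> norm_num); norm_num at h; linarith
  have hΓ : Real.cosh (33/20) ≤ (6749/2500:ℝ) := by have h := Uc9 (33/20) (by constructor <;> norm_num); norm_num at h; linarith
  have hK : Real.cosh (33/20) ^ ((7:ℝ)/15) ≤ (1987/1250:ℝ) := by
    refine le_trans (Real.rpow_le_rpow (Real.cosh_pos _).le hΓ (by norm_num)) ?_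
    exact rpow715K (6749/2500) (1987/1250) (by norm_num) (by norm_num) (by norm_num)
  refine seg (3/2) (33/20) (1987/1250) (by norm_num) (by norm_num) hK ?_ ?_ ?_ hta htb
  · nlinarith [hσ, hγ]
  · nlinarith [hσ, hγ]
  · have hs2 := pow_le_pow_left₀ (show (0:ℝ) ≤ 5323/2500 by norm_num) hσ 2
    nlinarith [hs2, hγ', hσ]

lemma seg2 : ∀ t:ℝ, 33/20 ≤ t → t ≤ 9/5 → 3 * Real.cosh t ^ ((7:ℝ)/15) * (t*Real.cosh t - Real.sinh t) < t * Real.sinh t^2 := by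
  intro t hta htb
  have hσ : (12537/5000:ℝ) ≤ Real.sinh (33/20) := by have h := sinh_lb5 (33/20) (by norm_num); norm_num at h; linarith
  have hγ : (5399/2000:ℝ) ≤ Real.cosh (33/20) := by have h := cosh_lb6 (33/20) (by norm_num); norm_num at h; linarith
  have hγ' : Real.cosh (33/20) ≤ (6749/2500:ℝ) := by have h := Uc9 (33/20) (by constructor <;> norm_num); norm_num at h; linarith
  have hΓ : Real.cosh (9/5) ≤ (1243/400:ℝ) := by have h := Uc9 (9/5) (by constructor <;> norm_num); norm_num at h; linarith
  have hK : Real.cosh (9/5) ^ ((7:ℝ)/15) ≤ (679/400:ℝ) := by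
    refine le_trans (Real.rpow_le_rpow (Real.cosh_pos _).le hΓ (by norm_num)) ?_
    exact rpow715K (1243/400) (679/400) (by norm_num) (by norm_num) (by norm_num)
  refine seg (33/20) (9/5) (679/400) (by norm_num) (by norm_num) hK ?_ ?_ ?_ hta htb
  · nlinarith [hσ, hγ]
  · nlinarith [hσ, hγ]
  · have hs2 := pow_le_pow_left₀ (show (0:ℝ) ≤ 12537/5000 by norm_num) hσ 2
    nlinarith [hs2, hγ', hσ]

lemma seg3 : ∀ t:ℝ, 9/5 ≤ t → t ≤ 2 → 3 * Real.cosh t ^ ((7:ℝ)/15) * (t*Real.cosh t - Real.sinh t) < t * Real.sinh t^2 := by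
  intro t hta htb
  have hσ : (29421/10000:ℝ) ≤ Real.sinh (9/5) := by have h := sinh_lb5 (9/5) (by norm_num); norm_num at h; linarith
  have hγ : (15537/5000:ℝ) ≤ Real.cosh (9/5) := by have h := cosh_lb6 (9/5) (by norm_num); norm_num at h; linarith
  have hγ' : Real.cosh (9/5) ≤ (1243/400:ℝ) := by have h := Uc9 (9/5) (by constructor <;> norm_num); norm_num at h; linarith
  have hΓ : Real.cosh (2) ≤ (18811/5000:ℝ) := by have h := Uc9 (2) (by constructor <;> norm_num); norm_num at h; linarith
  have hK : Real.cosh (2) ^ ((7:ℝ)/15) ≤ (18559/10000:ℝ) := by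
    refine le_trans (Real.rpow_le_rpow (Real.cosh_pos _).le hΓ (by norm_num)) ?_
    exact rpow715K (18811/5000) (18559/10000) (by norm_num) (by norm_num) (by norm_num)
  refine seg (9/5) (2) (18559/10000) (by norm_num) (by norm_num) hK ?_ ?_ ?_ hta htb
  · nlinarith [hσ, hγ]
  · nlinarith [hσ, hγ]
  · have hs2 := pow_le_pow_left₀ (show (0:ℝ) ≤ 29421/10000 by norm_num) hσ 2
    nlinarith [hs2, hγ', hσ]

lemma seg4 : ∀ t:ℝ, 2 ≤ t → t ≤ 23/10 → 3 * Real.cosh t ^ ((7:ℝ)/15) * (t*Real.cosh t - Real.sinh t) < t * Real.sinh t^2 := by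
  intro t hta htb
  have hσ : (9067/2500:ℝ) ≤ Real.sinh (2) := by have h := sinh_lb5 (2) (by norm_num); norm_num at h; linarith
  have hγ : (37621/10000:ℝ) ≤ Real.cosh (2) := by have h := cosh_lb6 (2) (by norm_num); norm_num at h; linarith
  have hγ' : Real.cosh (2) ≤ (18811/5000:ℝ) := by have h := Uc9 (2) (by constructor <;> norm_num); norm_num at h; linarith
  have hΓ : Real.cosh (23/10) ≤ (50373/10000:ℝ) := by have h := Uc9 (23/10) (by constructor <;> norm_num); norm_num at h; linarith
  have hK : Real.cosh (23/10) ^ ((7:ℝ)/15) ≤ (21267/10000:ℝ) := by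
    refine le_trans (Real.rpow_le_rpow (Real.cosh_pos _).le hΓ (by norm_num)) ?_
    exact rpow715K (50373/10000) (21267/10000) (by norm_num) (by norm_num) (by norm_num)
  refine seg (2) (23/10) (21267/10000) (by norm_num) (by norm_num) hK ?_ ?_ ?_ hta htb
  · nlinarith [hσ, hγ]
  · nlinarith [hσ, hγ]
  · have hs2 := pow_le_pow_left₀ (show (0:ℝ) ≤ 9067/2500 by norm_num) hσ 2
    nlinarith [hs2, hγ', hσ]

lemma seg5 : ∀ t:ℝ, 23/10 ≤ t → t ≤ 27/10 → 3 * Real.cosh t ^ ((7:ℝ)/15) * (t*Real.cosh t - Real.sinh t) < t * Real.sinh t^2 := by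
  intro t hta htb
  have hσ : (49369/10000:ℝ) ≤ Real.sinh (23/10) := by have h := sinh_lb5 (23/10) (by norm_num); norm_num at h; linarith
  have hγ : (12593/2500:ℝ) ≤ Real.cosh (23/10) := by have h := cosh_lb6 (23/10) (by norm_num); norm_num at h; linarith
  have hγ' : Real.cosh (23/10) ≤ (50373/10000:ℝ) := by have h := Uc9 (23/10) (by constructor <;> norm_num); norm_num at h; linarith
  have hΓ : Real.cosh (27/10) ≤ (14947/2000:ℝ) := by have h := Uc9 (27/10) (by constructor <;> norm_num); norm_num at h; linarith
  have hK : Real.cosh (27/10) ^ ((7:ℝ)/15) ≤ (5113/2000:ℝ) := by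
    refine le_trans (Real.rpow_le_rpow (Real.cosh_pos _).le hΓ (by norm_num)) ?_
    exact rpow715K (14947/2000) (5113/2000) (by norm_num) (by norm_num) (by norm_num)
  refine seg (23/10) (27/10) (5113/2000) (by norm_num) (by norm_num) hK ?_ ?_ ?_ hta htb
  · nlinarith [hσ, hγ]
  · nlinarith [hσ, hγ]
  · have hs2 := pow_le_pow_left₀ (show (0:ℝ) ≤ 49369/10000 by norm_num) hσ 2
    nlinarith [hs2, hγ', hσ]

lemma seg6 : ∀ t:ℝ, 27/10 ≤ t → t ≤ 16/5 → 3 * Real.cosh t ^ ((7:ℝ)/15) * (t*Real.cosh t - Real.sinh t) < t * Real.sinh t^2 := by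
  intro t hta htb
  have hσ : (74061/10000:ℝ) ≤ Real.sinh (27/10) := by have h := sinh_lb5 (27/10) (by norm_num); norm_num at h; linarith
  have hγ : (37367/5000:ℝ) ≤ Real.cosh (27/10) := by have h := cosh_lb6 (27/10) (by norm_num); norm_num at h; linarith
  have hγ' : Real.cosh (27/10) ≤ (14947/2000:ℝ) := by have h := Uc9 (27/10) (by constructor <;> norm_num); norm_num at h; linarith
  have hΓ : Real.cosh (16/5) ≤ (122867/10000:ℝ) := by have h := Uc9 (16/5) (by constructor <;> norm_num); norm_num at h; linarith
  have hK : Real.cosh (16/5) ^ ((7:ℝ)/15) ≤ (32241/10000:ℝ) := by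
    refine le_trans (Real.rpow_le_rpow (Real.cosh_pos _).le hΓ (by norm_num)) ?_
    exact rpow715K (122867/10000) (32241/10000) (by norm_num) (by norm_num) (by norm_num)
  refine seg (27/10) (16/5) (32241/10000) (by norm_num) (by norm_num) hK ?_ ?_ ?_ hta htb
  · nlinarith [hσ, hγ]
  · nlinarith [hσ, hγ]
  · have hs2 := pow_le_pow_left₀ (show (0:ℝ) ≤ 74061/10000 by norm_num) hσ 2
    nlinarith [hs2, hγ', hσ]

lemma seg7 : ∀ t:ℝ, 16/5 ≤ t → t ≤ 4 → 3 * Real.cosh t ^ ((7:ℝ)/15) * (t*Real.cosh t - Real.sinh t) < t * Real.sinh t^2 := by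
  intro t hta htb
  have hσ : (30613/2500:ℝ) ≤ Real.sinh (16/5) := by have h := sinh_lb5 (16/5) (by norm_num); norm_num at h; linarith
  have hγ : (24573/2000:ℝ) ≤ Real.cosh (16/5) := by have h := cosh_lb6 (16/5) (by norm_num); norm_num at h; linarith
  have hγ' : Real.cosh (16/5) ≤ (122867/10000:ℝ) := by have h := Uc9 (16/5) (by constructor <;> norm_num); norm_num at h; linarith
  have hΓ : Real.cosh (4) ≤ (273109/10000:ℝ) := by have h := Uc9 (4) (by constructor <;> norm_num); norm_num at h; linarith
  have hK : Real.cosh (4) ^ ((7:ℝ)/15) ≤ (9361/2000:ℝ) := by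
    refine le_trans (Real.rpow_le_rpow (Real.cosh_pos _).le hΓ (by norm_num)) ?_
    exact rpow715K (273109/10000) (9361/2000) (by norm_num) (by norm_num) (by norm_num)
  refine seg (16/5) (4) (9361/2000) (by norm_num) (by norm_num) hK ?_ ?_ ?_ hta htb
  · nlinarith [hσ, hγ]
  · nlinarith [hσ, hγ]
  · have hs2 := pow_le_pow_left₀ (show (0:ℝ) ≤ 30613/2500 by norm_num) hσ 2
    nlinarith [hs2, hγ', hσ]

lemma seg8 : ∀ t:ℝ, 4 ≤ t → t ≤ 11/2 → 3 * Real.cosh t ^ ((7:ℝ)/15) * (t*Real.cosh t - Real.sinh t) < t * Real.sinh t^2 := by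
  intro t hta htb
  have hσ : (136391/5000:ℝ) ≤ Real.sinh (4) := by have h := sinh_lb5 (4) (by norm_num); norm_num at h; linarith
  have hγ : (273049/10000:ℝ) ≤ Real.cosh (4) := by have h := cosh_lb6 (4) (by norm_num); norm_num at h; linarith
  have hγ' : Real.cosh (4) ≤ (273109/10000:ℝ) := by have h := Uc9 (4) (by constructor <;> norm_num); norm_num at h; linarith
  have hΓ : Real.cosh (11/2) ≤ (1231561/10000:ℝ) := by have h := Uc9 (11/2) (by constructor <;> norm_num); norm_num at h; linarith
  have hK : Real.cosh (11/2) ^ ((7:ℝ)/15) ≤ (3781/400:ℝ) := by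
    refine le_trans (Real.rpow_le_rpow (Real.cosh_pos _).le hΓ (by norm_num)) ?_
    exact rpow715K (1231561/10000) (3781/400) (by norm_num) (by norm_num) (by norm_num)
  refine seg (4) (11/2) (3781/400) (by norm_num) (by norm_num) hK ?_ ?_ ?_ hta htb
  · nlinarith [hσ, hγ]
  · nlinarith [hσ, hγ]
  · have hs2 := pow_le_pow_left₀ (show (0:ℝ) ≤ 136391/5000 by norm_num) hσ 2
    nlinarith [hs2, hγ', hσ]

lemma key_mid {t:ℝ} (h1 : 3/2 ≤ t) (h2 : t ≤ 11/2) : 3 * Real.cosh t ^ ((7:ℝ)/15) * (t*Real.cosh t - Real.sinh t) < t * Real.sinh t^2 := by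
  rcases le_or_gt t (33/20) with hx0 | hy0
  · exact seg1 t h1 hx0
  rcases le_or_gt t (9/5) with hx1 | hy1
  · exact seg2 t hy0.le hx1
  rcases le_or_gt t (2) with hx2 | hy2
  · exact seg3 t hy1.le hx2
  rcases le_or_gt t (23/10) with hx3 | hy3
  · exact seg4 t hy2.le hx3
  rcases le_or_gt t (27/10) with hx4 | hy4
  · exact seg5 t hy3.le hx4
  rcases le_or_gt t (16/5) with hx5 | hy5
  · exact seg6 t hy4.le hx5
  rcases le_or_gt t (4) with hx6 | hy6
  · exact seg7 t hy5.le hx6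
  exact seg8 t hy6.le h2

lemma key_tail {t : ℝ} (ht : 11/2 ≤ t) :
    3 * Real.cosh t ^ ((7:ℝ)/15) * (t*Real.cosh t - Real.sinh t) < t * Real.sinh t^2 := by
  have ht0 : (0:ℝ) < t := by linarith
  set z := Real.exp (t/15) with hzdef
  have hz1 : (1:ℝ) ≤ z := Real.one_le_exp (by positivity)
  have hzq : (2581/1800:ℝ) ≤ z := by
    have hs := Real.sum_le_exp_of_nonneg (x := t/15) (by positivity) 3
    have : 1 + t/15 + (t/15)^2/2 ≤ Real.exp (t/15) := by
      simpa [Finset.sum_range_succ, Nat.factorial] using hs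
    nlinarith [this, ht]
  have het : Real.exp t = z^15 := by
    rw [hzdef, ← Real.exp_nat_mul]; norm_num; congr 1; ring
  have he22 : Real.exp (7*t/15) * Real.exp t = z^22 := by
    rw [← Real.exp_add, hzdef, ← Real.exp_nat_mul]; norm_num; ring_nf
  have hc715 : Real.cosh t ^ ((7:ℝ)/15) ≤ Real.exp (7*t/15) := by
    calc Real.cosh t ^ ((7:ℝ)/15) ≤ (Real.exp t) ^ ((7:ℝ)/15) :=
          Real.rpow_le_rpow (Real.cosh_pos t).le (cosh_le_exp' ht0.le) (by norm_num)
      _ = Real.exp (7*t/15) := by rw [← Real.exp_mul]; ring_nf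
  have hsinh : (z^15 - 1)/2 ≤ Real.sinh t := by
    rw [Real.sinh_eq, ← het]
    have : Real.exp (-t) ≤ 1 := Real.exp_le_one_iff.mpr (by linarith)
    have h0 := (Real.exp_pos (-t)).le
    linarith
  have hz15 : (1:ℝ) ≤ z^15 := by
    calc (1:ℝ) = 1^15 := by norm_num
      _ ≤ z^15 := pow_le_pow_left₀ zero_le_one hz1 15
  have hsinh0 : (0:ℝ) ≤ (z^15 - 1)/2 := by linarith
  -- main estimate: 12 z^22 < (z^15 - 1)^2
  have hz8 : (89/5:ℝ) ≤ z^8 := by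
    have h := pow_le_pow_left₀ (by norm_num : (0:ℝ) ≤ 2581/1800) hzq 8
    have : ((2581:ℝ)/1800)^8 ≥ 89/5 := by norm_num
    linarith
  have hz22_15 : z^15 ≤ z^22 := pow_le_pow_right₀ hz1 (by norm_num)
  have hmain : 12 * z^22 < (z^15 - 1)^2 := by
    have e1 : z^30 = z^22 * z^8 := by ring
    have e2 : (89/5) * z^22 ≤ z^22 * z^8 := by nlinarith [pow_pos (lt_of_lt_of_le one_pos hz1) 22]
    nlinarith [hz22_15, pow_pos (lt_of_lt_of_le one_pos hz1) 15]
  -- combine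
  have hcosh_ub : Real.cosh t ≤ Real.exp t := cosh_le_exp' ht0.le
  have hB0 : 0 ≤ t*Real.cosh t - Real.sinh t := by linarith [tcs t ht0.le]
  have hBub : t*Real.cosh t - Real.sinh t ≤ t * Real.exp t := by
    have hs0 : 0 ≤ Real.sinh t := by
      rw [← Real.sinh_zero]; exact Real.sinh_le_sinh.mpr ht0.le
    nlinarith [hcosh_ub, ht0]
  have hL : 3 * Real.cosh t ^ ((7:ℝ)/15) * (t*Real.cosh t - Real.sinh t) ≤ 3 * (Real.exp (7*t/15) * (t * Real.exp t)) := by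
    have := mul_le_mul hc715 hBub hB0 (Real.exp_pos _).le
    nlinarith [this]
  have hR : t * ((z^15-1)/2)^2 ≤ t * Real.sinh t^2 := by
    have := pow_le_pow_left₀ hsinh0 hsinh 2
    nlinarith [ht0, this]
  have hzz : 3 * (Real.exp (7*t/15) * (t * Real.exp t)) = 3*t*z^22 := by
    rw [← he22]; ring
  have : 3*t*z^22 < t * ((z^15-1)/2)^2 := by
    nlinarith [hmain, ht0]
  linarith

lemma key {t : ℝ} (ht : 0 < t) :
    3 * Real.cosh t ^ ((7:ℝ)/15) * (t*Real.cosh t - Real.sinh t) < t * Real.sinh t^2 := by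
  rcases le_or_gt t (3/2) with h | h
  · exact key_small ht h
  · rcases le_or_gt t (11/2) with h2 | h2
    · exact key_mid h.le h2
    · exact key_tail h2.le

noncomputable def FF (t : ℝ) : ℝ :=
  5/8 * Real.cosh t ^ ((8:ℝ)/15) - 5/8 - (Real.log (Real.sinh t) - Real.log t)

noncomputable def FF' (t : ℝ) : ℝ :=
  5/8 * (8/15 * Real.cosh t ^ (-(7:ℝ)/15) * Real.sinh t) - (Real.cosh t / Real.sinh t - t⁻¹)

lemma FF_deriv {t : ℝ} (ht : 0 < t) : HasDerivAt FF (FF' t) t := by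
  have hs0 : 0 < Real.sinh t := by
    rw [← Real.sinh_zero]; exact Real.sinh_lt_sinh.mpr ht
  have h1 := (Real.hasDerivAt_cosh t).rpow_const (p := (8:ℝ)/15) (Or.inl (Real.cosh_pos t).ne')
  have h2 : HasDerivAt (fun t => Real.log (Real.sinh t)) (Real.cosh t / Real.sinh t) t :=
    (Real.hasDerivAt_sinh t).log hs0.ne'
  have h3 : HasDerivAt Real.log t⁻¹ t := Real.hasDerivAt_log ht.ne'
  have h4 := ((h1.const_mul (5/8)).sub_const (5/8)).sub (h2.sub h3)
  refine h4.congr_deriv ?_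
  unfold FF'
  rw [show ((8:ℝ)/15 - 1) = -(7:ℝ)/15 by norm_num]
  ring

lemma FF'_pos {t : ℝ} (ht : 0 < t) : 0 < FF' t := by
  have hs0 : 0 < Real.sinh t := by
    rw [← Real.sinh_zero]; exact Real.sinh_lt_sinh.mpr ht
  have hA : (0:ℝ) < Real.cosh t ^ ((7:ℝ)/15) := Real.rpow_pos_of_pos (Real.cosh_pos t) _
  have hneg : Real.cosh t ^ (-(7:ℝ)/15) = (Real.cosh t ^ ((7:ℝ)/15))⁻¹ := by
    rw [show (-(7:ℝ)/15) = -((7:ℝ)/15) by ring, Real.rpow_neg (Real.cosh_pos t).le]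
  have hk := key ht
  have hident : FF' t = (t * Real.sinh t^2 - 3 * Real.cosh t ^ ((7:ℝ)/15) * (t*Real.cosh t - Real.sinh t)) /
      (3 * t * Real.sinh t * Real.cosh t ^ ((7:ℝ)/15)) := by
    unfold FF'
    rw [hneg]
    field_simp
    ring
  rw [hident]
  apply div_pos (by linarith) (by positivity)

lemma FF_tendsto : Tendsto FF (nhdsWithin 0 (Ioi 0)) (nhds 0) := by
  have h1 : Tendsto (fun t : ℝ => Real.sinh t / t) (nhdsWithin 0 (Ioi 0)) (nhds 1) := by
    have h := (Real.hasDerivAt_sinh 0)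
    rw [hasDerivAt_iff_tendsto_slope] at h
    rw [Real.cosh_zero] at h
    have h2 : Tendsto (slope Real.sinh 0) (nhdsWithin 0 (Ioi 0)) (nhds 1) :=
      h.mono_left (nhdsWithin_mono 0 (fun x hx => ne_of_gt hx))
    refine h2.congr' ?_
    filter_upwards [self_mem_nhdsWithin] with x hx
    simp [slope_def_field, Real.sinh_zero]
  have h2 : Tendsto (fun t : ℝ => Real.log (Real.sinh t / t)) (nhdsWithin 0 (Ioi 0)) (nhds 0) := by
    have hc : ContinuousAt Real.log 1 := Real.continuousAt_log one_ne_zero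
    have := hc.tendsto.comp h1
    simpa [Function.comp_def] using this
  have h3 : Tendsto (fun t : ℝ => 5/8 * Real.cosh t ^ ((8:ℝ)/15) - 5/8) (nhdsWithin 0 (Ioi 0)) (nhds 0) := by
    have hc : Tendsto (fun t : ℝ => Real.cosh t ^ ((8:ℝ)/15)) (nhds 0) (nhds 1) := by
      have hcosh : Tendsto Real.cosh (nhds 0) (nhds 1) := by
        have := (Real.continuous_cosh.continuousAt (x := 0)).tendsto
        rwa [Real.cosh_zero] at this
      have hrpow : ContinuousAt (fun x : ℝ => x ^ ((8:ℝ)/15)) 1 :=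
        Real.continuousAt_rpow_const 1 _ (Or.inl one_ne_zero)
      have := hrpow.tendsto.comp hcosh
      simpa [Function.comp_def] using this
    have := (hc.const_mul (5/8)).sub_const (5/8)
    norm_num at this
    exact this.mono_left nhdsWithin_le_nhds
  have heq : ∀ᶠ t in nhdsWithin 0 (Ioi 0), (fun t => 5/8 * Real.cosh t ^ ((8:ℝ)/15) - 5/8 - Real.log (Real.sinh t / t)) t = FF t := by
    filter_upwards [self_mem_nhdsWithin] with x hx
    have hx0 : (0:ℝ) < x := hx
    have hs0 : 0 < Real.sinh x := by
      rw [← Real.sinh_zero]; exact Real.sinh_lt_sinh.mpr hx0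
    unfold FF
    rw [Real.log_div hs0.ne' hx0.ne']
  have := h3.sub h2
  norm_num at this
  exact (this.congr' heq)

theorem stmt_15 (x : ℝ) (hx : 0 < x) :
    Real.sinh x / x < Real.exp ((5 / 8) * (Real.cosh x) ^ ((8 : ℝ) / 15) - 5 / 8) := by
  have hs0 : 0 < Real.sinh x := by
    rw [← Real.sinh_zero]; exact Real.sinh_lt_sinh.mpr hx
  have hmono : StrictMonoOn FF (Ioi 0) := by
    apply strictMonoOn_of_deriv_pos (convex_Ioi 0)
    · exact fun t ht => (FF_deriv ht).continuousAt.continuousWithinAt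
    · intro t ht
      rw [interior_Ioi] at ht
      rw [(FF_deriv ht).deriv]
      exact FF'_pos ht
  have hhalf_mem : x/2 ∈ Ioi (0:ℝ) := half_pos hx
  have hF2 : 0 ≤ FF (x/2) := by
    refine le_of_tendsto FF_tendsto ?_
    have hIoo : Ioo (0:ℝ) (x/2) ∈ nhdsWithin 0 (Ioi 0) :=
      Ioo_mem_nhdsGT_of_mem ⟨le_refl 0, half_pos hx⟩
    filter_upwards [hIoo] with t ht
    exact (hmono ht.1 hhalf_mem ht.2).le
  have hFx : 0 < FF x := lt_of_le_of_lt hF2 (hmono hhalf_mem hx (by linarith))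
  unfold FF at hFx
  have hlog : Real.log (Real.sinh x / x) = Real.log (Real.sinh x) - Real.log x :=
    Real.log_div hs0.ne' hx.ne'
  have : Real.sinh x / x = Real.exp (Real.log (Real.sinh x / x)) :=
    (Real.exp_log (div_pos hs0 hx)).symm
  rw [this]
  apply Real.exp_lt_exp.mpr
  rw [hlog]
  linarith
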